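/- The set R₂ := {(0,0)} ∪ {(n, 2n+1), (2n+1, n) : n ≥ 0} ∪ {(2⌊nφ⌋+2, 2⌊nφ²⌋+2), (2⌊nφ²⌋+2, 2⌊nφ⌋+2) : n ≥ 0} is 'blocking-stable' for one blocked option: for every (p,q) ∈ R₂ with (p,q) ≠ (0,0), there is at most one Wythoff option of (p,q) lying in R₂. -/

import Mathlib

noncomputable def phi : ℝ := (1 + Real.sqrt 5) / 2

/-- `(r,s)` is a Wythoff option of `(p,q)`. -/
def WOpt (p q : ℕ × ℕ) : Prop :=
  (q.1 = p.1 ∧ q.2 < p.2) ∨ (q.1 < p.1 ∧ q.2 = p.2) ∨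
  (q.1 < p.1 ∧ q.2 < p.2 ∧ p.1 - q.1 = p.2 - q.2)

/-- The claimed set of P-positions of the blocking game `W²`. -/
noncomputable def R2 : Set (ℕ × ℕ) :=
  {(0, 0)} ∪
  {p : ℕ × ℕ | ∃ n : ℕ, p = (n, 2 * n + 1) ∨ p = (2 * n + 1, n)} ∪
  {p : ℕ × ℕ | ∃ n : ℕ,
    p = (2 * ⌊(n : ℝ) * phi⌋₊ + 2, 2 * ⌊(n : ℝ) * phi ^ 2⌋₊ + 2) ∨
    p = (2 * ⌊(n : ℝ) * phi ^ 2⌋₊ + 2, 2 * ⌊(n : ℝ) * phi⌋₊ + 2)}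

namespace R2aux

noncomputable def A (n : ℕ) : ℕ := ⌊(n : ℝ) * phi⌋₊

lemma phi_eq : phi = Real.goldenRatio := rfl

lemma one_lt_phi : (1:ℝ) < phi := phi_eq ▸ Real.one_lt_goldenRatio

lemma phi_pos : (0:ℝ) < phi := phi_eq ▸ Real.goldenRatio_pos

lemma phi_sq : phi ^ 2 = phi + 1 := phi_eq ▸ Real.goldenRatio_sq

lemma irr_phi : Irrational phi := phi_eq ▸ Real.goldenRatio_irrational

lemma irr_phi_sq : Irrational (phi ^ 2) := by
  rw [phi_sq, show phi + 1 = phi + ((1:ℕ):ℝ) by norm_num, irrational_add_natCast_iff]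
  exact irr_phi

lemma nmul_nonneg (n : ℕ) : (0:ℝ) ≤ (n : ℝ) * phi :=
  mul_nonneg (Nat.cast_nonneg n) (le_of_lt phi_pos)

lemma floorA (n : ℕ) : ⌊(n : ℝ) * phi⌋₊ = A n := rfl

lemma floorB (n : ℕ) : ⌊(n : ℝ) * phi ^ 2⌋₊ = A n + n := by
  have h : (n : ℝ) * phi ^ 2 = (n : ℝ) * phi + n := by rw [phi_sq]; ring
  rw [h, Nat.floor_add_natCast (nmul_nonneg n), A]

lemma A_zero : A 0 = 0 := by simp [A]

lemma A_ge (n : ℕ) : n ≤ A n := by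
  apply Nat.le_floor
  nlinarith [one_lt_phi, Nat.cast_nonneg (α := ℝ) n]

lemma A_lt {m n : ℕ} (h : m < n) : A m < A n := by
  have h1 : (m : ℝ) * phi + ((1:ℕ):ℝ) ≤ (n : ℝ) * phi := by
    have hmn : (m : ℝ) + 1 ≤ (n : ℝ) := by exact_mod_cast h
    push_cast
    nlinarith [one_lt_phi, Nat.cast_nonneg (α := ℝ) m]
  have h2 : ⌊(m : ℝ) * phi + ((1:ℕ):ℝ)⌋₊ = A m + 1 :=
    Nat.floor_add_natCast (nmul_nonneg m) 1
  have h3 : ⌊(m : ℝ) * phi + ((1:ℕ):ℝ)⌋₊ ≤ A n := Nat.floor_mono h1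
  omega

lemma A_inj {m n : ℕ} (h : A m = A n) : m = n := by
  rcases lt_trichotomy m n with h' | h' | h'
  · exact absurd h (Nat.ne_of_lt (A_lt h'))
  · exact h'
  · exact absurd h.symm (Nat.ne_of_lt (A_lt h'))

lemma B_inj {m n : ℕ} (h : A m + m = A n + n) : m = n := by
  rcases lt_trichotomy m n with h' | h' | h'
  · have := A_lt h'; omega
  · exact h'
  · have := A_lt h'; omega

/-- Beatty disjointness: `⌊jφ⌋ ≠ ⌊kφ²⌋` for `j, k ≥ 1`. -/
lemma disj {j k : ℕ} (hj : 1 ≤ j) (hk : 1 ≤ k) : A j ≠ A k + k := by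
  intro h
  set N := A j with hN
  have hBk : ⌊(k : ℝ) * phi ^ 2⌋₊ = N := by rw [floorB, ← h]
  have hxi : Irrational ((j : ℝ) * phi) :=
    irrational_natCast_mul_iff.2 ⟨by omega, irr_phi⟩
  have hyi : Irrational ((k : ℝ) * phi ^ 2) :=
    irrational_natCast_mul_iff.2 ⟨by omega, irr_phi_sq⟩
  have hx0 : (0:ℝ) ≤ (j : ℝ) * phi := nmul_nonneg j
  have hy0 : (0:ℝ) ≤ (k : ℝ) * phi ^ 2 := mul_nonneg (Nat.cast_nonneg k) (le_of_lt (pow_pos phi_pos 2))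
  have hx1 : (N : ℝ) < (j : ℝ) * phi := by
    rcases lt_or_eq_of_le (Nat.floor_le hx0 : ((⌊(j : ℝ) * phi⌋₊ : ℝ)) ≤ _) with h' | h'
    · exact h'
    · exact absurd h'.symm (hxi.ne_nat _)
  have hx2 : (j : ℝ) * phi < N + 1 := by
    have h' := Nat.lt_floor_add_one ((j : ℝ) * phi)
    rw [floorA, ← hN] at h'
    exact_mod_cast h'
  have hy1 : (N : ℝ) < (k : ℝ) * phi ^ 2 := by
    have h0 : ((⌊(k : ℝ) * phi ^ 2⌋₊ : ℝ)) ≤ (k : ℝ) * phi ^ 2 := Nat.floor_le hy0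
    rw [hBk] at h0
    rcases lt_or_eq_of_le h0 with h' | h'
    · exact h'
    · exact absurd h'.symm (hyi.ne_nat _)
  have hy2 : (k : ℝ) * phi ^ 2 < N + 1 := by
    have h' := Nat.lt_floor_add_one ((k : ℝ) * phi ^ 2)
    rw [hBk] at h'
    exact_mod_cast h'
  have hphi2 : (0:ℝ) < phi ^ 2 := pow_pos phi_pos 2
  have hj1 : (N : ℝ) / phi < j := (div_lt_iff₀ phi_pos).2 hx1
  have hj2 : (j : ℝ) < (N + 1) / phi := (lt_div_iff₀ phi_pos).2 hx2
  have hk1 : (N : ℝ) / phi ^ 2 < k := (div_lt_iff₀ hphi2).2 hy1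
  have hk2 : (k : ℝ) < (N + 1) / phi ^ 2 := (lt_div_iff₀ hphi2).2 hy2
  have hphi  : phi ≠ 0 := ne_of_gt phi_pos
  have hsum : ∀ c : ℝ, c / phi + c / phi ^ 2 = c := by
    intro c
    rw [div_add_div _ _ hphi (ne_of_gt hphi2), div_eq_iff (by positivity)]
    linear_combination (-(c * phi)) * phi_sq
  have hs1 : (N : ℝ) < (j : ℝ) + k := by
    have := hsum (N : ℝ); linarith
  have hs2 : (j : ℝ) + k < N + 1 := by
    have := hsum ((N : ℝ) + 1); linarith
  have h1 : N < j + k := by exact_mod_cast hs1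
  have h2 : ((j + k : ℕ) : ℝ) < ((N + 1 : ℕ) : ℝ) := by push_cast; linarith
  have h2' : j + k < N + 1 := by exact_mod_cast h2
  omega

/-- Explicit description of membership in `R2`. -/
lemma mem_R2 (p : ℕ × ℕ) : p ∈ R2 ↔
    p = (0,0) ∨ (∃ n, p = (n, 2*n+1) ∨ p = (2*n+1, n)) ∨
      (∃ n, p = (2*A n + 2, 2*(A n + n) + 2) ∨ p = (2*(A n + n) + 2, 2*A n + 2)) := by
  unfold R2
  simp only [Set.mem_union, Set.mem_singleton_iff, Set.mem_setOf_eq, floorA, floorB]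
  constructor
  · rintro ((h | h) | h)
    · exact Or.inl h
    · exact Or.inr (Or.inl h)
    · exact Or.inr (Or.inr h)
  · rintro (h | h | h)
    · exact Or.inl (Or.inl h)
    · exact Or.inl (Or.inr h)
    · exact Or.inr h

/-- The possible second coordinates of a column option. -/
def Col (n s : ℕ) : Prop :=
  (n = 0 ∧ s = 0) ∨ (∃ m, n = 2*m+1 ∧ s = m) ∨
    (∃ k, (n = 2*A k + 2 ∧ s = 2*(A k + k) + 2) ∨ (n = 2*(A k + k) + 2 ∧ s = 2*A k + 2))

lemma Col_unique {n s₁ s₂ : ℕ} (h₁ : Col n s₁) (h₂ : Col n s₂) : s₁ = s₂ := by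
  rcases h₁ with ⟨hn, hs⟩ | ⟨m, hn, hs⟩ | ⟨k, ⟨hn, hs⟩ | ⟨hn, hs⟩⟩ <;>
    rcases h₂ with ⟨hn', hs'⟩ | ⟨m', hn', hs'⟩ | ⟨k', ⟨hn', hs'⟩ | ⟨hn', hs'⟩⟩ <;>
      subst hs <;> subst hs' <;> try omega
  · -- A k = A k'
    have hkk : k = k' := A_inj (by omega)
    subst hkk; rfl
  · -- A k = A k' + k'
    have hAk : A k = A k' + k' := by omega
    rcases Nat.eq_zero_or_pos k' with h0 | h0
    · subst h0
      have h1 := A_ge k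
      have hz := A_zero
      omega
    · rcases Nat.eq_zero_or_pos k with h1 | h1
      · subst h1
        have h2 := A_ge k'
        have hz := A_zero
        omega
      · exact absurd hAk (disj h1 h0)
  · -- A k + k = A k'
    have hAk : A k' = A k + k := by omega
    rcases Nat.eq_zero_or_pos k with h0 | h0
    · subst h0
      have h1 := A_ge k'
      have hz := A_zero
      omega
    · rcases Nat.eq_zero_or_pos k' with h1 | h1
      · subst h1
        have h2 := A_ge k
        have hz := A_zero
        omega
      · exact absurd hAk (disj h1 h0)
  · -- A k + k = A k' + k'
    have hkk : k = k' := B_inj (by omega)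
    subst hkk; rfl

/-- Characterization of the `R2`-options of `(n, 2n+1)`. -/
lemma charL (n : ℕ) (q : ℕ × ℕ) (hq : q ∈ R2) (h : WOpt (n, 2*n+1) q) :
    q.1 = n ∧ Col n q.2 := by
  rw [mem_R2] at hq
  rcases hq with rfl | ⟨m, rfl | rfl⟩ | ⟨k, rfl | rfl⟩
  · rcases h with ⟨h1, h2⟩ | ⟨h1, h2⟩ | ⟨h1, h2, h3⟩
    · exact ⟨h1, Or.inl ⟨by omega, rfl⟩⟩
    · exfalso; omega
    · exfalso; omega
  · rcases h with ⟨h1, h2⟩ | ⟨h1, h2⟩ | ⟨h1, h2, h3⟩ <;> exfalso <;> omega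
  · rcases h with ⟨h1, h2⟩ | ⟨h1, h2⟩ | ⟨h1, h2, h3⟩
    · exact ⟨h1, Or.inr (Or.inl ⟨m, by omega, rfl⟩)⟩
    · exfalso; omega
    · exfalso; omega
  · have hk := A_ge k
    rcases h with ⟨h1, h2⟩ | ⟨h1, h2⟩ | ⟨h1, h2, h3⟩
    · exact ⟨h1, Or.inr (Or.inr ⟨k, Or.inl ⟨by omega, rfl⟩⟩)⟩
    · exfalso; omega
    · exfalso; omega
  · have hk := A_ge k
    rcases h with ⟨h1, h2⟩ | ⟨h1, h2⟩ | ⟨h1, h2, h3⟩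
    · exact ⟨h1, Or.inr (Or.inr ⟨k, Or.inr ⟨by omega, rfl⟩⟩)⟩
    · exfalso; omega
    · exfalso; omega

/-- Characterization of the `R2`-options of `(2⌊nφ⌋+2, 2⌊nφ²⌋+2)`. -/
lemma charE (n : ℕ) (q : ℕ × ℕ) (hq : q ∈ R2)
    (h : WOpt (2*A n + 2, 2*(A n + n) + 2) q) : q = (2*n - 1, 4*n - 1) := by
  have hn := A_ge n
  rw [mem_R2] at hq
  rcases hq with rfl | ⟨m, rfl | rfl⟩ | ⟨k, rfl | rfl⟩
  · rcases h with ⟨h1, h2⟩ | ⟨h1, h2⟩ | ⟨h1, h2, h3⟩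
    · exfalso; omega
    · exfalso; omega
    · simp only [Prod.mk.injEq]; omega
  · rcases h with ⟨h1, h2⟩ | ⟨h1, h2⟩ | ⟨h1, h2, h3⟩
    · exfalso; omega
    · exfalso; omega
    · simp only [Prod.mk.injEq]; omega
  · rcases h with ⟨h1, h2⟩ | ⟨h1, h2⟩ | ⟨h1, h2, h3⟩ <;> exfalso <;> omega
  · -- q = (2 A k + 2, 2 (A k + k) + 2)
    have hk := A_ge k
    rcases h with ⟨h1, h2⟩ | ⟨h1, h2⟩ | ⟨h1, h2, h3⟩
    · exfalso
      have hkn : k = n := A_inj (by omega)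
      subst hkn; omega
    · exfalso
      have hkn : k = n := B_inj (by omega)
      subst hkn; omega
    · exfalso
      have hkn : k = n := by omega
      subst hkn; omega
  · -- q = (2 (A k + k) + 2, 2 A k + 2)
    have hk := A_ge k
    have hz := A_zero
    rcases h with ⟨h1, h2⟩ | ⟨h1, h2⟩ | ⟨h1, h2, h3⟩
    · exfalso
      rcases Nat.eq_zero_or_pos k with h0 | h0
      · subst h0
        have hn0 : n = 0 := by omega
        subst hn0; omega
      · rcases Nat.eq_zero_or_pos n with h4 | h4
        · subst h4; omega
        · exact absurd (show A n = A k + k by omega) (disj h4 h0)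
    · exfalso
      rcases Nat.eq_zero_or_pos k with h0 | h0
      · subst h0
        have hn0 : n = 0 := by omega
        subst hn0; omega
      · rcases Nat.eq_zero_or_pos n with h4 | h4
        · subst h4; omega
        · exact absurd (show A k = A n + n by omega) (disj h0 h4)
    · exfalso
      have hnk : n = 0 ∧ k = 0 := by omega
      obtain ⟨hn0, hk0⟩ := hnk
      subst hn0; subst hk0; omega

lemma WOpt_swap {p q : ℕ × ℕ} (h : WOpt p q) : WOpt (p.2, p.1) (q.2, q.1) := by
  rcases h with ⟨h1, h2⟩ | ⟨h1, h2⟩ | ⟨h1, h2, h3⟩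
  · exact Or.inr (Or.inl ⟨h2, h1⟩)
  · exact Or.inl ⟨h2, h1⟩
  · exact Or.inr (Or.inr ⟨h2, h1, h3.symm⟩)

lemma R2_swap {p : ℕ × ℕ} (h : p ∈ R2) : (p.2, p.1) ∈ R2 := by
  rw [mem_R2] at h ⊢
  rcases h with rfl | ⟨n, rfl | rfl⟩ | ⟨n, rfl | rfl⟩
  · exact Or.inl rfl
  · exact Or.inr (Or.inl ⟨n, Or.inr rfl⟩)
  · exact Or.inr (Or.inl ⟨n, Or.inl rfl⟩)
  · exact Or.inr (Or.inr ⟨n, Or.inr rfl⟩)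
  · exact Or.inr (Or.inr ⟨n, Or.inl rfl⟩)

end R2aux

/-- Blocking-stability of `R₂`: every nonzero position of `R₂` has at most
    one Wythoff option in `R₂`. -/
theorem R2_blocking_stable :
    ∀ p ∈ R2, p ≠ (0, 0) →
      ∀ q₁ ∈ R2, ∀ q₂ ∈ R2, WOpt p q₁ → WOpt p q₂ → q₁ = q₂ := by
  intro p hp hne q₁ hq₁ q₂ hq₂ h₁ h₂
  rw [R2aux.mem_R2] at hp
  rcases hp with rfl | ⟨n, rfl | rfl⟩ | ⟨n, rfl | rfl⟩
  · exact absurd rfl hne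
  · obtain ⟨e₁, c₁⟩ := R2aux.charL n q₁ hq₁ h₁
    obtain ⟨e₂, c₂⟩ := R2aux.charL n q₂ hq₂ h₂
    have h := R2aux.Col_unique c₁ c₂
    rw [Prod.ext_iff]
    exact ⟨e₁.trans e₂.symm, h⟩
  · have h₁' : WOpt (n, 2*n+1) (q₁.2, q₁.1) := R2aux.WOpt_swap h₁
    have h₂' : WOpt (n, 2*n+1) (q₂.2, q₂.1) := R2aux.WOpt_swap h₂
    obtain ⟨e₁, c₁⟩ := R2aux.charL n _ (R2aux.R2_swap hq₁) h₁'
    obtain ⟨e₂, c₂⟩ := R2aux.charL n _ (R2aux.R2_swap hq₂) h₂'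
    have h := R2aux.Col_unique c₁ c₂
    rw [Prod.ext_iff]
    exact ⟨h, e₁.trans e₂.symm⟩
  · have e₁ := R2aux.charE n q₁ hq₁ h₁
    have e₂ := R2aux.charE n q₂ hq₂ h₂
    rw [e₁, e₂]
  · have h₁' : WOpt (2*R2aux.A n + 2, 2*(R2aux.A n + n) + 2) (q₁.2, q₁.1) :=
      R2aux.WOpt_swap h₁
    have h₂' : WOpt (2*R2aux.A n + 2, 2*(R2aux.A n + n) + 2) (q₂.2, q₂.1) :=
      R2aux.WOpt_swap h₂
    have e₁ := R2aux.charE n _ (R2aux.R2_swap hq₁) h₁'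
    have e₂ := R2aux.charE n _ (R2aux.R2_swap hq₂) h₂'
    rw [Prod.ext_iff] at e₁ e₂ ⊢
    exact ⟨e₁.2.trans e₂.2.symm, e₁.1.trans e₂.1.symm⟩
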